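/- Let l, m : ℝ → ℝ² with l moving at speed at most 1 and m at speed at most 1+ε, and suppose ‖m(t) − l(t)‖ ≥ r − Δ > 0 throughout an interval [t_j, t_{j+1}] of length Δ. Let ξ(t) be a continuous determination of the angle of the vector m(t) − l(t). Then ξ(t) − ξ(t_j) ≤ 2·arcsin((2+ε)Δ / (2(r − Δ))) for all t ∈ [t_j, t_{j+1}], provided (2+ε)Δ ≤ 2(r − Δ). -/

import Mathlib

open Set Complex

/-- sine is larger in the middle of `(a, π - a)` than at `a`. -/
lemma sin_gt_of_between {a x : ℝ} (ha : 0 ≤ a) (hax : a < x) (hxa : x < Real.pi - a) :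
    Real.sin a < Real.sin x := by
  have hpi := Real.pi_pos
  by_cases hx : x ≤ Real.pi / 2
  · exact Real.sin_lt_sin_of_lt_of_le_pi_div_two (by linarith) hx hax
  · rw [← Real.sin_pi_sub x]
    exact Real.sin_lt_sin_of_lt_of_le_pi_div_two (by linarith) (by linarith) (by linarith)

lemma chord_norm_sq (a b α β : ℝ) :
    ‖(a : ℂ) * Complex.exp ((α : ℂ) * Complex.I)
      - (b : ℂ) * Complex.exp ((β : ℂ) * Complex.I)‖ ^ 2
      = a ^ 2 + b ^ 2 - 2 * a * b * Real.cos (α - β) := by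
  rw [Complex.sq_norm, Complex.normSq_apply]
  simp only [Complex.sub_re, Complex.sub_im, Complex.mul_re, Complex.mul_im,
    Complex.ofReal_re, Complex.ofReal_im, Complex.exp_ofReal_mul_I_re,
    Complex.exp_ofReal_mul_I_im, Real.cos_sub]
  nlinarith [Real.sin_sq_add_cos_sq α, Real.sin_sq_add_cos_sq β]

lemma chord_lower (R a b α β : ℝ) (hR : 0 < R) (ha : R ≤ a) (hb : R ≤ b) :
    2 * R * |Real.sin ((α - β) / 2)|
      ≤ ‖(a : ℂ) * Complex.exp ((α : ℂ) * Complex.I)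
          - (b : ℂ) * Complex.exp ((β : ℂ) * Complex.I)‖ := by
  have hsinsq : Real.sin ((α - β) / 2) ^ 2 = 1 / 2 - Real.cos (α - β) / 2 := by
    have := Real.sin_sq_eq_half_sub ((α - β) / 2)
    rw [mul_div_cancel₀ _ (two_ne_zero)] at this
    exact this
  have hcos1 : Real.cos (α - β) ≤ 1 := Real.cos_le_one _
  have h5 : (0:ℝ) ≤ a * b - R ^ 2 := by nlinarith
  have h6 : 0 ≤ (1 - Real.cos (α - β)) * (a * b - R ^ 2) := mul_nonneg (by linarith) h5
  have hsq : (2 * R * |Real.sin ((α - β) / 2)|) ^ 2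
      ≤ ‖(a : ℂ) * Complex.exp ((α : ℂ) * Complex.I)
          - (b : ℂ) * Complex.exp ((β : ℂ) * Complex.I)‖ ^ 2 := by
    rw [chord_norm_sq, mul_pow, _root_.sq_abs, hsinsq]
    nlinarith [sq_nonneg (a - b), h6]
  have h7 : 0 ≤ 2 * R * |Real.sin ((α - β) / 2)| := by positivity
  nlinarith [norm_nonneg ((a : ℂ) * Complex.exp ((α : ℂ) * Complex.I)
      - (b : ℂ) * Complex.exp ((β : ℂ) * Complex.I))]

/-- If the lion moves at speed at most `1`, the man at speed at most `1+ε`, and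
they stay at distance at least `r − Δ > 0` throughout an interval of length `Δ`,
then a continuous determination `ξ` of the angle of `m(t) − l(t)` increases by at
most `2·arcsin((2+ε)Δ/(2(r−Δ)))`. -/
theorem stmt_8 (ε r Δ tj : ℝ) (hε : 0 < ε) (hΔ : 0 < Δ) (hΔr : Δ < r)
    (hcond : (2 + ε) * Δ ≤ 2 * (r - Δ))
    (l m : ℝ → ℂ)
    (hl : ∀ s ∈ Icc tj (tj + Δ), ∀ t ∈ Icc tj (tj + Δ), ‖l s - l t‖ ≤ |s - t|)
    (hm : ∀ s ∈ Icc tj (tj + Δ), ∀ t ∈ Icc tj (tj + Δ),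
      ‖m s - m t‖ ≤ (1 + ε) * |s - t|)
    (hfar : ∀ t ∈ Icc tj (tj + Δ), r - Δ ≤ ‖m t - l t‖)
    (ξ : ℝ → ℝ) (hξc : ContinuousOn ξ (Icc tj (tj + Δ)))
    (hξ : ∀ t ∈ Icc tj (tj + Δ),
      m t = l t + (‖m t - l t‖ : ℂ) * Complex.exp ((ξ t : ℂ) * Complex.I)) :
    ∀ t ∈ Icc tj (tj + Δ),
      ξ t - ξ tj ≤ 2 * Real.arcsin ((2 + ε) * Δ / (2 * (r - Δ))) := by
  have hpi := Real.pi_pos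
  set R : ℝ := r - Δ with hRdef
  clear_value R
  have hR : 0 < R := by rw [hRdef]; linarith
  set q : ℝ := (2 + ε) * Δ / (2 * R) with hqdef
  have hq0 : 0 ≤ q := by rw [hqdef]; positivity
  have hq1 : q ≤ 1 := by
    rw [hqdef, div_le_one (by positivity)]; linarith
  have hqR : q * (2 * R) = (2 + ε) * Δ := by
    rw [hqdef]; field_simp
  clear_value q
  have htjmem : tj ∈ Icc tj (tj + Δ) := ⟨le_refl _, by linarith⟩
  -- key pointwise inequality
  have key : ∀ s ∈ Icc tj (tj + Δ),
      2 * R * |Real.sin ((ξ s - ξ tj) / 2)| ≤ (2 + ε) * (s - tj) := by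
    intro s hs
    obtain ⟨hs1, hs2⟩ := hs
    have hsmem : s ∈ Icc tj (tj + Δ) := ⟨hs1, hs2⟩
    have hvs : m s - l s = (‖m s - l s‖ : ℂ) * Complex.exp ((ξ s : ℂ) * Complex.I) := by
      conv_lhs => rw [hξ s hsmem]
      exact add_sub_cancel_left _ _
    have hvj : m tj - l tj = (‖m tj - l tj‖ : ℂ) * Complex.exp ((ξ tj : ℂ) * Complex.I) := by
      conv_lhs => rw [hξ tj htjmem]
      exact add_sub_cancel_left _ _
    -- chord bound
    have h1 : ‖(m s - l s) - (m tj - l tj)‖ ≤ (2 + ε) * (s - tj) := by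
      have he : (m s - l s) - (m tj - l tj) = (m s - m tj) - (l s - l tj) := by ring
      have h2 := hm s hsmem tj htjmem
      have h3 := hl s hsmem tj htjmem
      have habs : |s - tj| = s - tj := abs_of_nonneg (by linarith)
      rw [habs] at h2 h3
      calc ‖(m s - l s) - (m tj - l tj)‖ = ‖(m s - m tj) - (l s - l tj)‖ := by rw [he]
        _ ≤ ‖m s - m tj‖ + ‖l s - l tj‖ := norm_sub_le _ _
        _ ≤ (2 + ε) * (s - tj) := by linarith
    have hlow := chord_lower R ‖m s - l s‖ ‖m tj - l tj‖ (ξ s) (ξ tj) hR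
      (hfar s hsmem) (hfar tj htjmem)
    rw [← hvs, ← hvj] at hlow
    exact hlow.trans h1
  -- main argument
  intro t ht
  by_contra hcon
  push_neg at hcon
  set B : ℝ := 2 * Real.arcsin q with hBdef
  have hB0 : 0 ≤ B := by
    have := Real.arcsin_nonneg.2 hq0
    rw [hBdef]; linarith
  have hBpi : B ≤ Real.pi := by
    have := Real.arcsin_le_pi_div_two q
    rw [hBdef]; linarith
  have hsinB : Real.sin (B / 2) = q := by
    rw [hBdef, mul_div_cancel_left₀ _ (two_ne_zero)]
    exact Real.sin_arcsin (by linarith) hq1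
  clear_value B
  obtain ⟨ht1, ht2⟩ := ht
  by_cases hcase : ξ t - ξ tj < 2 * Real.pi - B
  · -- direct case
    have hBltpi : B < Real.pi := by linarith
    have hx1 : B / 2 < (ξ t - ξ tj) / 2 := by linarith
    have hx2 : (ξ t - ξ tj) / 2 < Real.pi - B / 2 := by linarith
    have hsin : q < Real.sin ((ξ t - ξ tj) / 2) := by
      rw [← hsinB]
      exact sin_gt_of_between (by linarith) hx1 hx2
    have hk := key t ⟨ht1, ht2⟩
    have h2 : (2 + ε) * (t - tj) ≤ q * (2 * R) := by
      rw [hqR]; nlinarith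
    have h3 : Real.sin ((ξ t - ξ tj) / 2) ≤ |Real.sin ((ξ t - ξ tj) / 2)| := le_abs_self _
    nlinarith
  · -- IVT case
    push_neg at hcase
    have hgt : Real.pi < ξ t - ξ tj := by linarith
    have hgc : ContinuousOn (fun s => ξ s - ξ tj) (Icc tj t) :=
      (hξc.mono (Icc_subset_Icc_right ht2)).sub continuousOn_const
    have hmem : Real.pi ∈ Icc (ξ tj - ξ tj) (ξ t - ξ tj) := by
      constructor
      · simp; linarith
      · linarith
    obtain ⟨s, hsmem, hgs⟩ := intermediate_value_Icc ht1 hgc hmem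
    obtain ⟨hs1, hs2⟩ := hsmem
    have hk := key s ⟨hs1, by linarith⟩
    simp only [hgs] at hk
    rw [Real.sin_pi_div_two] at hk
    simp only [abs_one, mul_one] at hk
    -- 2R ≤ (2+ε)(s - tj) and (2+ε)Δ ≤ 2R force s = tj + Δ, hence s = t
    have hsge : Δ ≤ s - tj := by
      have h2ε : (0:ℝ) < 2 + ε := by linarith
      nlinarith
    have hst : s = t := le_antisymm hs2 (by linarith)
    have hfinal : ξ t - ξ tj = Real.pi := by rw [← hst]; exact hgs
    linarith
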